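/- Let S ⊂ ℝⁿ be a (U,m)-set with unit cell U of diameter d and c(S) = (Vol(U)/(m·Vₙ))^{1/n}. Define AMD_k(S;U) = (1/m) Σ_{p∈S∩U} d_k(S;p). Then |AMD_k(S;U) − c(S)·k^{1/n}| ≤ d for all k ≥ 1, and consequently AMD_k(S;U)/k^{1/n} → c(S) as k → ∞. -/

import Mathlib

open Metric Set MeasureTheory Filter

/-- The `k`-th nearest neighbour distance from `p` to the set `X` (excluding `p` itself). -/
noncomputable def kthNNDist {E : Type*} [MetricSpace E] (X : Set E) (p : E) (k : ℕ) : ℝ :=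
  sInf {r : ℝ | k ≤ Nat.card ↥((X \ {p}) ∩ Metric.closedBall p r)}

/-- The lattice generated by a basis `b` of `ℝⁿ`: all integer linear combinations. -/
def latticeOf {n : ℕ} (b : Module.Basis (Fin n) ℝ (EuclideanSpace ℝ (Fin n))) :
    Set (EuclideanSpace ℝ (Fin n)) :=
  {x | ∃ c : Fin n → ℤ, x = ∑ i, (c i : ℝ) • b i}

/-- The unit cell of the basis `b`. -/
def unitCellOf {n : ℕ} (b : Module.Basis (Fin n) ℝ (EuclideanSpace ℝ (Fin n))) :
    Set (EuclideanSpace ℝ (Fin n)) :=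
  {x | ∀ i, b.repr x i ∈ Set.Ico (0 : ℝ) 1}

namespace AMDaux

open Submodule Bornology Pointwise

variable {n : ℕ} (b : Module.Basis (Fin n) ℝ (EuclideanSpace ℝ (Fin n)))

/-- The cell of the tiling translated by `v`. -/
def cell (v : EuclideanSpace ℝ (Fin n)) : Set (EuclideanSpace ℝ (Fin n)) :=
  (v + ·) '' unitCellOf b

lemma unitCell_eq_fd : unitCellOf b = ZSpan.fundamentalDomain b := rfl

lemma latticeOf_eq : latticeOf b = (span ℤ (Set.range ⇑b) : Set (EuclideanSpace ℝ (Fin n))) := by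
  have hsum : ∀ c : Fin n → ℤ, (∑ i, (c i : ℝ) • b i) = ∑ i, c i • b i :=
    fun c => Finset.sum_congr rfl fun i _ => Int.cast_smul_eq_zsmul ℝ _ _
  ext x
  rw [SetLike.mem_coe, mem_span_range_iff_exists_fun]
  constructor
  · rintro ⟨c, rfl⟩
    exact ⟨c, (hsum c).symm⟩
  · rintro ⟨c, hc⟩
    exact ⟨c, by rw [hsum c, hc]⟩

lemma mem_cell {v x : EuclideanSpace ℝ (Fin n)} :
    x ∈ cell b v ↔ x - v ∈ unitCellOf b := by
  constructor
  · rintro ⟨u, hu, rfl⟩; simpa using hu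
  · intro h; exact ⟨x - v, h, by show v + (x - v) = x; rw [add_sub_cancel]⟩

lemma cellOf_mem_lattice (x : EuclideanSpace ℝ (Fin n)) :
    x - ZSpan.fract b x ∈ span ℤ (Set.range ⇑b) := by
  rw [ZSpan.fract_apply]; simpa using (ZSpan.floor b x).2

lemma mem_cell_iff_eq {v x : EuclideanSpace ℝ (Fin n)} (hv : v ∈ span ℤ (Set.range ⇑b)) :
    x ∈ cell b v ↔ x - ZSpan.fract b x = v := by
  rw [mem_cell, unitCell_eq_fd, ← ZSpan.fract_eq_self]
  have h2 : ZSpan.fract b (x - v) = ZSpan.fract b x := by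
    rw [sub_eq_add_neg, ZSpan.fract_add_ZSpan b x (neg_mem hv)]
  rw [h2]
  constructor
  · intro h; rw [h]; exact sub_sub_cancel x v
  · intro h; rw [← h]; exact (sub_sub_cancel x _).symm

lemma mem_cell_self (x : EuclideanSpace ℝ (Fin n)) :
    x ∈ cell b (x - ZSpan.fract b x) :=
  (mem_cell_iff_eq b (cellOf_mem_lattice b x)).mpr rfl

lemma cell_eq_preimage (v : EuclideanSpace ℝ (Fin n)) :
    cell b v = (fun x => x - v) ⁻¹' unitCellOf b := by
  ext x; rw [mem_cell]; rfl

lemma volume_cell (v : EuclideanSpace ℝ (Fin n)) :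
    volume (cell b v) = volume (unitCellOf b) := by
  rw [cell_eq_preimage]
  simp_rw [sub_eq_add_neg]
  exact measure_preimage_add_right volume (-v) _

lemma measurableSet_cell (v : EuclideanSpace ℝ (Fin n)) : MeasurableSet (cell b v) := by
  rw [cell_eq_preimage]
  exact (measurable_id.sub_const v) (unitCell_eq_fd b ▸ ZSpan.fundamentalDomain_measurableSet b)

lemma dist_le_diam_of_mem_cell {v x y : EuclideanSpace ℝ (Fin n)}
    (hx : x ∈ cell b v) (hy : y ∈ cell b v) :
    dist x y ≤ Metric.diam (unitCellOf b) := by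
  obtain ⟨u, hu, rfl⟩ := hx
  obtain ⟨w, hw, rfl⟩ := hy
  have : dist (v + u) (v + w) = dist u w := dist_add_left v u w
  rw [this]
  exact Metric.dist_le_diam_of_mem (unitCell_eq_fd b ▸ ZSpan.fundamentalDomain_isBounded b) hu hw

/-- The set of lattice vectors whose cells meet `A`. -/
def CM (A : Set (EuclideanSpace ℝ (Fin n))) : Set (EuclideanSpace ℝ (Fin n)) :=
  {v | v ∈ span ℤ (Set.range ⇑b) ∧ (cell b v ∩ A).Nonempty}

lemma CM_finite {A : Set (EuclideanSpace ℝ (Fin n))} (hA : IsBounded A) : (CM b A).Finite := by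
  have hsub : CM b A ⊆ (A - unitCellOf b) ∩ (span ℤ (Set.range ⇑b) : Set (EuclideanSpace ℝ (Fin n))) := by
    rintro v ⟨hv, x, hxc, hxA⟩
    refine ⟨Set.mem_sub.mpr ⟨x, hxA, x - v, (mem_cell b).mp hxc, sub_sub_cancel x v⟩, hv⟩
  refine Set.Finite.subset ?_ hsub
  haveI : DiscreteTopology
      ↥((span ℤ (Set.range ⇑b) : Submodule ℤ _) : Set (EuclideanSpace ℝ (Fin n))) :=
    inferInstanceAs (DiscreteTopology (span ℤ (Set.range ⇑b)))
  refine Metric.finite_isBounded_inter_isClosed DiscreteTopology.isDiscrete (hA.sub (unitCell_eq_fd b ▸ ZSpan.fundamentalDomain_isBounded b)) ?_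
  exact AddSubgroup.isClosed_of_discrete (H := (span ℤ (Set.range ⇑b)).toAddSubgroup)

lemma coverage {A : Set (EuclideanSpace ℝ (Fin n))} (hA : IsBounded A) :
    A ⊆ ⋃ v ∈ (CM_finite b hA).toFinset, cell b v := by
  intro x hx
  exact Set.mem_biUnion ((CM_finite b hA).mem_toFinset.mpr
    ⟨cellOf_mem_lattice b x, ⟨x, mem_cell_self b x, hx⟩⟩) (mem_cell_self b x)

lemma cell_subset_ball {p : EuclideanSpace ℝ (Fin n)} {ρ : ℝ} {v : EuclideanSpace ℝ (Fin n)}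
    (hv : v ∈ CM b (closedBall p ρ)) :
    cell b v ⊆ closedBall p (ρ + Metric.diam (unitCellOf b)) := by
  obtain ⟨-, x, hxc, hxB⟩ := hv
  intro y hy
  rw [mem_closedBall] at hxB ⊢
  calc dist y p ≤ dist y x + dist x p := dist_triangle y x p
    _ ≤ Metric.diam (unitCellOf b) + ρ := add_le_add (dist_le_diam_of_mem_cell b hy hxc) hxB
    _ = ρ + Metric.diam (unitCellOf b) := add_comm _ _

lemma card_biUnion (S : Set (EuclideanSpace ℝ (Fin n))) (m : ℕ) (hm : 0 < m)
    (hUm' : ∀ v ∈ span ℤ (Set.range ⇑b), Nat.card ↥(S ∩ cell b v) = m)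
    (F : Finset (EuclideanSpace ℝ (Fin n)))
    (hF : ∀ v ∈ F, v ∈ span ℤ (Set.range ⇑b)) :
    (S ∩ ⋃ v ∈ F, cell b v).Finite ∧ (S ∩ ⋃ v ∈ F, cell b v).ncard = m * F.card := by
  classical
  induction F using Finset.induction_on with
  | empty => simp
  | @insert a F ha ih =>
    have haL : a ∈ span ℤ (Set.range ⇑b) := hF a (Finset.mem_insert_self a F)
    have hFL : ∀ v ∈ F, v ∈ span ℤ (Set.range ⇑b) :=
      fun v hv => hF v (Finset.mem_insert_of_mem hv)
    obtain ⟨hfin, hcard⟩ := ih hFL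
    have hsplit : S ∩ ⋃ v ∈ insert a F, cell b v
        = (S ∩ cell b a) ∪ (S ∩ ⋃ v ∈ F, cell b v) := by
      rw [Finset.set_biUnion_insert, Set.inter_union_distrib_left]
    have hfinA : (S ∩ cell b a).Finite := by
      rw [← Set.finite_coe_iff]
      exact Nat.finite_of_card_ne_zero (by rw [hUm' a haL]; omega)
    have hdisj : Disjoint (S ∩ cell b a) (S ∩ ⋃ v ∈ F, cell b v) := by
      rw [Set.disjoint_left]
      rintro x ⟨-, hxa⟩ ⟨-, hxF⟩
      simp only [Set.mem_iUnion, exists_prop] at hxF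
      obtain ⟨v, hvF, hxv⟩ := hxF
      have e1 := (mem_cell_iff_eq b haL).mp hxa
      have e2 := (mem_cell_iff_eq b (hFL v hvF)).mp hxv
      exact ha (by rw [← e1.symm.trans e2] at hvF; exact hvF)
    constructor
    · rw [hsplit]; exact hfinA.union hfin
    · rw [hsplit, Set.ncard_union_eq hdisj hfinA hfin, hcard,
        ← Nat.card_coe_set_eq, hUm' a haL, Finset.card_insert_of_notMem ha]
      ring

end AMDaux

open scoped ENNReal
open AMDaux Submodule Bornology

/-- Asymptotic behaviour of AMD: for a `(U,m)`-set `S ⊂ ℝⁿ`,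
`|AMD_k(S;U) − c(S)·k^{1/n}| ≤ d` for all `k ≥ 1`, where `d` is the diameter of `U` and
`c(S)` the point packing coefficient; consequently `AMD_k(S;U)/k^{1/n} → c(S)`. -/
theorem AMD_asymptotic {n : ℕ} (hn : 0 < n)
    (b : Module.Basis (Fin n) ℝ (EuclideanSpace ℝ (Fin n)))
    (S : Set (EuclideanSpace ℝ (Fin n))) (m : ℕ) (hm : 0 < m)
    (hUm : ∀ v ∈ latticeOf b, Nat.card ↥(S ∩ ((v + ·) '' unitCellOf b)) = m)
    (hfin : (S ∩ unitCellOf b).Finite)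
    (d c : ℝ) (hd : d = Metric.diam (unitCellOf b))
    (hc : c = ((volume (unitCellOf b)).toReal /
      (m * (volume (Metric.ball (0 : EuclideanSpace ℝ (Fin n)) 1)).toReal)) ^ ((1 : ℝ) / n))
    (amd : ℕ → ℝ)
    (hamd : ∀ k, amd k = (∑ p ∈ hfin.toFinset, kthNNDist S p k) / m) :
    (∀ k : ℕ, 1 ≤ k → |amd k - c * (k : ℝ) ^ ((1 : ℝ) / n)| ≤ d) ∧
    Tendsto (fun k : ℕ => amd k / (k : ℝ) ^ ((1 : ℝ) / n)) atTop (nhds c) := by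
  classical
  have hUm' : ∀ v ∈ span ℤ (Set.range ⇑b), Nat.card ↥(S ∩ cell b v) = m := by
    intro v hv
    exact hUm v (by rw [latticeOf_eq b]; exact hv)
  have hd0 : 0 ≤ d := hd ▸ Metric.diam_nonneg
  set VU : ℝ := (volume (unitCellOf b)).toReal with hVUdef
  set VB : ℝ := (volume (Metric.ball (0 : EuclideanSpace ℝ (Fin n)) 1)).toReal with hVBdef
  have hUbdd : IsBounded (unitCellOf b) := unitCell_eq_fd b ▸ ZSpan.fundamentalDomain_isBounded b
  have hUtop : volume (unitCellOf b) ≠ ⊤ := by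
    obtain ⟨r, hr⟩ := hUbdd.subset_closedBall 0
    exact ((measure_mono hr).trans_lt measure_closedBall_lt_top).ne
  have hVU : 0 < VU := ENNReal.toReal_pos
    (unitCell_eq_fd b ▸ ZSpan.measure_fundamentalDomain_ne_zero b) hUtop
  have hBtop : volume (Metric.ball (0 : EuclideanSpace ℝ (Fin n)) 1) ≠ ⊤ := measure_ball_lt_top.ne
  have hVB : 0 < VB := ENNReal.toReal_pos (measure_ball_pos volume 0 one_pos).ne' hBtop
  have hmR : (0:ℝ) < m := by exact_mod_cast hm
  have hnR : (n : ℝ) ≠ 0 := Nat.cast_ne_zero.mpr hn.ne'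
  have hvolball : ∀ (p : EuclideanSpace ℝ (Fin n)) (ρ : ℝ), 0 ≤ ρ →
      (volume (closedBall p ρ)).toReal = ρ ^ n * VB := by
    intro p ρ hρ
    rw [Measure.addHaar_closedBall volume p hρ, finrank_euclideanSpace_fin,
      ENNReal.toReal_mul, ENNReal.toReal_ofReal (pow_nonneg hρ n)]
  have hkpow : ∀ k : ℕ, ((k : ℝ) ^ ((1 : ℝ) / n)) ^ n = k := by
    intro k
    rw [← Real.rpow_natCast ((k : ℝ) ^ ((1 : ℝ) / n)) n, ← Real.rpow_mul (Nat.cast_nonneg k),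
      one_div, inv_mul_cancel₀ hnR, Real.rpow_one]
  have hc0 : 0 ≤ c := by rw [hc]; positivity
  have hcpow : c ^ n = VU / (m * VB) := by
    rw [hc, ← Real.rpow_natCast _ n, ← Real.rpow_mul (by positivity),
      one_div, inv_mul_cancel₀ hnR, Real.rpow_one]
  have hκ0 : ∀ k : ℕ, 0 ≤ (k:ℝ) ^ ((1:ℝ)/n) := fun k => Real.rpow_nonneg (Nat.cast_nonneg k) _
  -- S is finite on bounded sets
  have hSfin : ∀ A : Set (EuclideanSpace ℝ (Fin n)), IsBounded A → (S ∩ A).Finite := by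
    intro A hA
    refine Set.Finite.subset (card_biUnion b S m hm hUm' (CM_finite b hA).toFinset
      (fun v hv => ((CM_finite b hA).mem_toFinset.mp hv).1)).1 ?_
    exact Set.inter_subset_inter_right S (coverage b hA)
  -- lower count
  have countLB : ∀ (p : EuclideanSpace ℝ (Fin n)) (ρ : ℝ), 0 ≤ ρ → ∃ N : ℕ,
      ρ ^ n * VB ≤ VU * N ∧ m * N ≤ (S ∩ closedBall p (ρ + d)).ncard := by
    intro p ρ hρ
    have hbdd : IsBounded (closedBall p ρ) := Metric.isBounded_closedBall
    refine ⟨(CM_finite b hbdd).toFinset.card, ?_, ?_⟩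
    · have hvol : volume (closedBall p ρ)
          ≤ ((CM_finite b hbdd).toFinset.card : ℝ≥0∞) * volume (unitCellOf b) := by
        refine (measure_mono (coverage b hbdd)).trans ?_
        refine (measure_biUnion_finset_le _ _).trans ?_
        simp_rw [volume_cell b]
        rw [Finset.sum_const, nsmul_eq_mul]
      have h2 := ENNReal.toReal_mono
        (ENNReal.mul_ne_top (ENNReal.natCast_ne_top _) hUtop) hvol
      rw [hvolball p ρ hρ, ENNReal.toReal_mul, ENNReal.toReal_natCast] at h2
      rw [mul_comm VU _]
      exact h2
    · have hsub : (S ∩ ⋃ v ∈ (CM_finite b hbdd).toFinset, cell b v)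
          ⊆ S ∩ closedBall p (ρ + d) := by
        refine Set.inter_subset_inter_right S ?_
        refine Set.iUnion₂_subset fun v hv => ?_
        rw [hd]
        exact cell_subset_ball b ((CM_finite b hbdd).mem_toFinset.mp hv)
      obtain ⟨hfin2, hcard2⟩ := card_biUnion b S m hm hUm' (CM_finite b hbdd).toFinset
        (fun v hv => ((CM_finite b hbdd).mem_toFinset.mp hv).1)
      rw [← hcard2]
      exact Set.ncard_le_ncard hsub (hSfin _ Metric.isBounded_closedBall)
  -- upper count
  have countUB : ∀ (p : EuclideanSpace ℝ (Fin n)) (r : ℝ), 0 ≤ r → ∃ N : ℕ,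
      (S ∩ closedBall p r).ncard ≤ m * N ∧ (N : ℝ) * VU ≤ (r + d) ^ n * VB := by
    intro p r hr
    have hbdd : IsBounded (closedBall p r) := Metric.isBounded_closedBall
    refine ⟨(CM_finite b hbdd).toFinset.card, ?_, ?_⟩
    · obtain ⟨hfin2, hcard2⟩ := card_biUnion b S m hm hUm' (CM_finite b hbdd).toFinset
        (fun v hv => ((CM_finite b hbdd).mem_toFinset.mp hv).1)
      rw [← hcard2]
      exact Set.ncard_le_ncard (Set.inter_subset_inter_right S (coverage b hbdd)) hfin2
    · have hdisj : (↑(CM_finite b hbdd).toFinset :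
          Set (EuclideanSpace ℝ (Fin n))).PairwiseDisjoint (cell b) := by
        intro v hv w hw hvw
        rw [Set.Finite.coe_toFinset] at hv hw
        rw [Function.onFun, Set.disjoint_left]
        intro x hxv hxw
        exact hvw (((mem_cell_iff_eq b hv.1).mp hxv).symm.trans
          ((mem_cell_iff_eq b hw.1).mp hxw))
      have hsub : (⋃ v ∈ (CM_finite b hbdd).toFinset, cell b v) ⊆ closedBall p (r + d) := by
        refine Set.iUnion₂_subset fun v hv => ?_
        rw [hd]
        exact cell_subset_ball b ((CM_finite b hbdd).mem_toFinset.mp hv)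
      have hvol : ((CM_finite b hbdd).toFinset.card : ℝ≥0∞) * volume (unitCellOf b)
          ≤ volume (closedBall p (r + d)) := by
        calc ((CM_finite b hbdd).toFinset.card : ℝ≥0∞) * volume (unitCellOf b)
            = ∑ v ∈ (CM_finite b hbdd).toFinset, volume (cell b v) := by
              simp_rw [volume_cell b]
              rw [Finset.sum_const, nsmul_eq_mul]
          _ = volume (⋃ v ∈ (CM_finite b hbdd).toFinset, cell b v) :=
              (measure_biUnion_finset hdisj (fun v _ => measurableSet_cell b v)).symm
          _ ≤ _ := measure_mono hsub
      have h2 := ENNReal.toReal_mono measure_closedBall_lt_top.ne hvol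
      rw [hvolball p (r + d) (by linarith), ENNReal.toReal_mul, ENNReal.toReal_natCast] at h2
      exact h2
  -- membership of c k^{1/n} + d + ε in the defining set of kthNNDist
  have memD : ∀ (p : EuclideanSpace ℝ (Fin n)) (k : ℕ) (ε : ℝ), 1 ≤ k → 0 < ε →
      k ≤ Nat.card ↥((S \ {p}) ∩ closedBall p (c * (k:ℝ) ^ ((1:ℝ)/n) + d + ε)) := by
    intro p k ε hk hε
    set κ := (k:ℝ) ^ ((1:ℝ)/n) with hκ
    obtain ⟨N, h1, h2⟩ := countLB p (c * κ + ε) (by have := hκ0 k; positivity)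
    have hklt : (k:ℝ) < (m:ℝ) * N := by
      have hρpow : (c * κ) ^ n < (c * κ + ε) ^ n :=
        pow_lt_pow_left₀ (by linarith) (by have := hκ0 k; positivity) hn.ne'
      have e1 : (c * κ) ^ n = VU / (m * VB) * k := by rw [mul_pow, hcpow, hκ, hkpow]
      have h4 : (c * κ) ^ n * VB < VU * N :=
        lt_of_lt_of_le (mul_lt_mul_of_pos_right hρpow hVB) h1
      rw [e1] at h4
      have h5 : VU / (m * VB) * (k : ℝ) * VB = VU * k / m := by field_simp
      rw [h5] at h4
      rw [div_lt_iff₀ hmR] at h4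
      have h6 : VU * ((k:ℝ)) < VU * ((m:ℝ) * N) := by nlinarith
      exact lt_of_mul_lt_mul_left h6 hVU.le
    have hkN : k + 1 ≤ m * N := by
      have : k < m * N := by exact_mod_cast hklt
      omega
    have hfinsp : ((S \ {p}) ∩ closedBall p (c * κ + ε + d)).Finite :=
      (hSfin _ Metric.isBounded_closedBall).subset
        (fun x hx => ⟨hx.1.1, hx.2⟩)
    have hins : S ∩ closedBall p (c * κ + ε + d)
        ⊆ insert p ((S \ {p}) ∩ closedBall p (c * κ + ε + d)) := by
      rintro x ⟨hxS, hxB⟩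
      rcases eq_or_ne x p with rfl | hxp
      · exact Set.mem_insert _ _
      · exact Set.mem_insert_of_mem _ ⟨⟨hxS, hxp⟩, hxB⟩
    have hcount : k + 1 ≤ (S ∩ closedBall p (c * κ + ε + d)).ncard := le_trans hkN h2
    have hstep : (S ∩ closedBall p (c * κ + ε + d)).ncard
        ≤ ((S \ {p}) ∩ closedBall p (c * κ + ε + d)).ncard + 1 :=
      le_trans (Set.ncard_le_ncard hins (hfinsp.insert p)) (Set.ncard_insert_le _ _)
    have : k ≤ ((S \ {p}) ∩ closedBall p (c * κ + ε + d)).ncard := by omega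
    rw [Nat.card_coe_set_eq]
    have heq : c * κ + d + ε = c * κ + ε + d := by ring
    rw [heq]
    exact this
  -- per-point upper bound
  have ub : ∀ (p : EuclideanSpace ℝ (Fin n)) (k : ℕ), 1 ≤ k →
      kthNNDist S p k ≤ c * (k:ℝ) ^ ((1:ℝ)/n) + d := by
    intro p k hk
    have hbdd : BddBelow {r : ℝ | k ≤ Nat.card ↥((S \ {p}) ∩ closedBall p r)} := by
      refine ⟨0, fun r hr => ?_⟩
      have hne : Nonempty ↥((S \ {p}) ∩ closedBall p r) :=
        (Nat.card_ne_zero.mp (by simp only [Set.mem_setOf_eq] at hr; omega)).1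
      obtain ⟨x, -, hxB⟩ := hne
      exact le_trans dist_nonneg hxB
    refine le_of_forall_pos_le_add fun ε hε => ?_
    exact csInf_le hbdd (memD p k ε hk hε)
  -- per-point lower bound
  have lb : ∀ (p : EuclideanSpace ℝ (Fin n)) (k : ℕ), 1 ≤ k →
      c * (k:ℝ) ^ ((1:ℝ)/n) - d ≤ kthNNDist S p k := by
    intro p k hk
    set κ := (k:ℝ) ^ ((1:ℝ)/n) with hκ
    refine le_csInf ⟨c * κ + d + 1, memD p k 1 hk one_pos⟩ fun r hr => ?_
    simp only [Set.mem_setOf_eq] at hr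
    have hne : Nonempty ↥((S \ {p}) ∩ closedBall p r) :=
      (Nat.card_ne_zero.mp (by omega)).1
    obtain ⟨x, -, hxB⟩ := hne
    have hr0 : (0:ℝ) ≤ r := le_trans dist_nonneg hxB
    obtain ⟨N, hN1, hN2⟩ := countUB p r hr0
    have hk1 : k ≤ (S ∩ closedBall p r).ncard := by
      rw [Nat.card_coe_set_eq] at hr
      refine le_trans hr (Set.ncard_le_ncard ?_ (hSfin _ Metric.isBounded_closedBall))
      exact fun x hx => ⟨hx.1.1, hx.2⟩
    have hk2 : (k : ℝ) ≤ (m:ℝ) * N := by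
      have : (k:ℝ) ≤ ((m * N : ℕ) : ℝ) := by exact_mod_cast le_trans hk1 hN1
      push_cast at this
      exact this
    have e1 : (c * κ) ^ n = VU / (m * VB) * k := by rw [mul_pow, hcpow, hκ, hkpow]
    have h5 : VU * (k:ℝ) ≤ (r + d) ^ n * ((m:ℝ) * VB) := by
      calc VU * (k:ℝ) ≤ VU * ((m:ℝ) * N) := mul_le_mul_of_nonneg_left hk2 hVU.le
        _ = (m:ℝ) * ((N:ℝ) * VU) := by ring
        _ ≤ (m:ℝ) * ((r + d) ^ n * VB) := mul_le_mul_of_nonneg_left hN2 hmR.le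
        _ = (r + d) ^ n * ((m:ℝ) * VB) := by ring
    have h6 : (c * κ) ^ n ≤ (r + d) ^ n := by
      rw [e1, div_mul_eq_mul_div, div_le_iff₀ (by positivity)]
      linarith
    have h7 : c * κ ≤ r + d := by
      have hcκ : 0 ≤ c * κ := by have := hκ0 k; positivity
      exact (pow_le_pow_iff_left₀ hcκ (by linarith) hn.ne').mp h6
    linarith
  -- per-point absolute bound
  have habs : ∀ (p : EuclideanSpace ℝ (Fin n)) (k : ℕ), 1 ≤ k →
      |kthNNDist S p k - c * (k:ℝ) ^ ((1:ℝ)/n)| ≤ d := by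
    intro p k hk
    rw [abs_le]
    constructor
    · linarith [lb p k hk]
    · linarith [ub p k hk]
  -- cardinality of the unit cell points
  have hcardU : hfin.toFinset.card = m := by
    have h0 : cell b (0 : EuclideanSpace ℝ (Fin n)) = unitCellOf b := by
      ext x
      rw [mem_cell, sub_zero]
    have h1 := hUm' 0 (zero_mem _)
    rw [h0, Nat.card_coe_set_eq, Set.ncard_eq_toFinset_card _ hfin] at h1
    exact h1
  -- first conjunct
  have part1 : ∀ k : ℕ, 1 ≤ k → |amd k - c * (k : ℝ) ^ ((1 : ℝ) / n)| ≤ d := by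
    intro k hk
    rw [hamd k]
    set κ := (k:ℝ) ^ ((1:ℝ)/n) with hκ
    have hsplit : (∑ p ∈ hfin.toFinset, kthNNDist S p k) / m - c * κ
        = (∑ p ∈ hfin.toFinset, (kthNNDist S p k - c * κ)) / m := by
      rw [Finset.sum_sub_distrib, Finset.sum_const, hcardU, nsmul_eq_mul]
      field_simp
    rw [hsplit, abs_div, abs_of_pos hmR, div_le_iff₀ hmR]
    refine le_trans (Finset.abs_sum_le_sum_abs _ _) ?_
    refine le_trans (Finset.sum_le_sum fun p _ => habs p k hk) ?_
    rw [Finset.sum_const, hcardU, nsmul_eq_mul, mul_comm]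
  refine ⟨part1, ?_⟩
  -- second conjunct
  rw [tendsto_iff_dist_tendsto_zero]
  have hg : Tendsto (fun k : ℕ => d / (k:ℝ) ^ ((1:ℝ)/n)) atTop (nhds 0) := by
    apply Tendsto.div_atTop tendsto_const_nhds
    exact (tendsto_rpow_atTop (by positivity : (0:ℝ) < 1/n)).comp
      tendsto_natCast_atTop_atTop
  refine squeeze_zero' ?_ ?_ hg
  · filter_upwards with k using dist_nonneg
  · filter_upwards [eventually_ge_atTop 1] with k hk
    have hκp : (0:ℝ) < (k:ℝ) ^ ((1:ℝ)/n) :=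
      Real.rpow_pos_of_pos (by exact_mod_cast hk) _
    rw [Real.dist_eq]
    have hsplit : amd k / (k:ℝ) ^ ((1:ℝ)/n) - c
        = (amd k - c * (k:ℝ) ^ ((1:ℝ)/n)) / (k:ℝ) ^ ((1:ℝ)/n) := by
      field_simp
    rw [hsplit, abs_div, abs_of_pos hκp]
    exact (div_le_div_iff_of_pos_right hκp).mpr (part1 k hk)
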